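/- Let f : [0,1] → ℝ be continuous and positive, let X be a finite index set with y_u ∈ [0,1] for each u ∈ X, and let y = sup{ t ∈ [0,1] : Σ_{u∈X} max(t − y_u, 0) ≤ f(t) } (the set is nonempty since it contains 0). Then either y = 1 or Σ_{u∈X} max(y − y_u, 0) = f(y). -/
import Mathlib


/-- Water-level lemma: with `f` continuous and positive on `[0,1]` and
`y = sup { t ∈ [0,1] : Σ_{u ∈ X} max (t - y_u) 0 ≤ f t }` (the set contains `0`),
either `y = 1` or the allocation constraint is tight at `y`. -/
theorem water_level_lemma {ι : Type*} (f : ℝ → ℝ)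
    (hfc : ContinuousOn f (Set.Icc 0 1))
    (hfpos : ∀ t ∈ Set.Icc (0:ℝ) 1, 0 < f t)
    (X : Finset ι) (yu : ι → ℝ) (hyu : ∀ u ∈ X, yu u ∈ Set.Icc (0:ℝ) 1)
    (y : ℝ)
    (hy : y = sSup {t ∈ Set.Icc (0:ℝ) 1 | ∑ u ∈ X, max (t - yu u) 0 ≤ f t}) :
    y = 1 ∨ ∑ u ∈ X, max (y - yu u) 0 = f y := by
  set g : ℝ → ℝ := fun t => ∑ u ∈ X, max (t - yu u) 0 with hg
  set S : Set ℝ := {t ∈ Set.Icc (0:ℝ) 1 | g t ≤ f t} with hS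
  have hgc : Continuous g := by
    apply continuous_finset_sum
    intro u _
    exact (continuous_id.sub continuous_const).max continuous_const
  have h0S : (0:ℝ) ∈ S := by
    constructor
    · exact Set.mem_Icc.mpr ⟨le_refl 0, zero_le_one⟩
    · have : g 0 = 0 := by
        apply Finset.sum_eq_zero
        intro u hu
        have := (hyu u hu).1
        have h0 : (0:ℝ) - yu u ≤ 0 := by linarith
        exact max_eq_right h0
      rw [this]
      exact (hfpos 0 (by simp)).le
  have hSne : S.Nonempty := ⟨0, h0S⟩
  have hSbdd : BddAbove S := ⟨1, fun t ht => ht.1.2⟩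
  have hSclosed : IsClosed S := by
    have : S = Set.Icc 0 1 ∩ {t | g t - f t ≤ 0} := by
      ext t; simp [hS, Set.mem_setOf_eq, sub_nonpos]
    rw [this]
    have := ContinuousOn.preimage_isClosed_of_isClosed
      (hgc.continuousOn.sub hfc) isClosed_Icc (isClosed_Iic (a := (0:ℝ)))
    simpa [Set.preimage, Set.mem_Iic] using this
  have hyS : y ∈ S := hy ▸ hSclosed.csSup_mem hSne hSbdd
  have hy01 : y ∈ Set.Icc (0:ℝ) 1 := hyS.1
  have hyle : g y ≤ f y := hyS.2
  rcases eq_or_lt_of_le hy01.2 with h1 | hlt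
  · exact Or.inl h1
  · right
    by_contra hne
    have hstrict : g y < f y := lt_of_le_of_ne hyle hne
    -- continuity of g - f within Icc at y
    have hcont : ContinuousWithinAt (fun t => g t - f t) (Set.Icc 0 1) y :=
      (hgc.continuousWithinAt).sub (hfc y hy01)
    have hnhds : {t | g t - f t < 0} ∈ nhdsWithin y (Set.Icc 0 1) := by
      have := hcont (Iio_mem_nhds (show g y - f y < 0 by linarith))
      simpa [Set.preimage, Set.mem_Iio] using this
    rw [Metric.mem_nhdsWithin_iff] at hnhds
    obtain ⟨ε, hε, hball⟩ := hnhds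
    set t := min (y + ε / 2) 1 with ht
    have hty : y < t := lt_min (by linarith) hlt
    have htIcc : t ∈ Set.Icc (0:ℝ) 1 := by
      constructor
      · exact le_min (by linarith [hy01.1]) zero_le_one
      · exact min_le_right _ _
    have htball : t ∈ Metric.ball y ε := by
      rw [Metric.mem_ball, Real.dist_eq, abs_sub_lt_iff]
      constructor
      · have : t ≤ y + ε / 2 := min_le_left _ _
        linarith
      · linarith
    have htS : t ∈ S := ⟨htIcc, by have := hball ⟨htball, htIcc⟩; simp only [Set.mem_setOf_eq] at this; linarith⟩
    have : t ≤ y := hy ▸ le_csSup hSbdd htS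
    linarith
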